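/- Suppose X is a bounded operator on H₁ such that for μ-a.e. ω the operator H − ζ(ω)·I is boundedly invertible, ω ↦ K(ω)∘H∘(H−ζ(ω))⁻¹ is Bochner integrable, and X = V(Ã + X), where H := Ã + X. If u ∈ H₁, u ≠ 0, z ∈ ℂ and H u = z u, then z ≠ ζ(ω) for a.e. ω, the function ω ↦ (z/(z−ζ(ω)))·(K(ω) u) is Bochner integrable, and Ã u − z u + ∫ (z/(z−ζ(ω)))·(K(ω) u) dμ(ω) = 0; that is, u lies in the kernel of the analytically continued transfer function M(z). -/
import Mathlib


open MeasureTheory ContinuousLinearMap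

/-- Characteristic property of the basic equation (Section 2): if `H = Ã + X` solves
the basic equation and `H u = z u` with `u ≠ 0`, then `z ≠ ζ(ω)` a.e., the function
`ω ↦ (z/(z-ζ(ω))) K(ω)u` is Bochner integrable, and
`Ã u - z u + ∫ (z/(z-ζ(ω))) K(ω)u dμ(ω) = 0`, i.e. `u ∈ ker M(z)`. -/
theorem eigenvector_of_solution_in_ker_transfer
    {H : Type*} [NormedAddCommGroup H] [InnerProductSpace ℂ H] [CompleteSpace H]
    {Ω : Type*} [MeasurableSpace Ω] (μ : Measure Ω)
    (ζ : Ω → ℂ) (hζ : Measurable ζ)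
    (K : Ω → H →L[ℂ] H) (hK : Integrable K μ)
    (A : H →L[ℂ] H) (hA : IsSelfAdjoint A)
    (X : H →L[ℂ] H)
    (hunit : ∀ᵐ ω ∂μ, IsUnit (A + X - ζ ω • (1 : H →L[ℂ] H)))
    (hint : Integrable (fun ω =>
      K ω ∘L ((A + X) ∘L Ring.inverse (A + X - ζ ω • (1 : H →L[ℂ] H)))) μ)
    (hfix : X = ∫ ω,
      K ω ∘L ((A + X) ∘L Ring.inverse (A + X - ζ ω • (1 : H →L[ℂ] H))) ∂μ)
    (u : H) (hu : u ≠ 0) (z : ℂ) (heig : (A + X) u = z • u) :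
    (∀ᵐ ω ∂μ, z ≠ ζ ω) ∧
    Integrable (fun ω => (z / (z - ζ ω)) • (K ω u)) μ ∧
    A u - z • u + ∫ ω, (z / (z - ζ ω)) • (K ω u) ∂μ = 0 := by
  -- basic computation: (A + X - ζω•1) u = (z - ζω) • u
  have hTu : ∀ ω, (A + X - ζ ω • (1 : H →L[ℂ] H)) u = (z - ζ ω) • u := by
    intro ω
    simp [ContinuousLinearMap.sub_apply, heig, sub_smul]
  have hz : ∀ᵐ ω ∂μ, z ≠ ζ ω := by
    filter_upwards [hunit] with ω hω hzω
    apply hu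
    have hinv : Ring.inverse (A + X - ζ ω • (1 : H →L[ℂ] H)) *
        (A + X - ζ ω • (1 : H →L[ℂ] H)) = 1 := Ring.inverse_mul_cancel _ hω
    have : u = (Ring.inverse (A + X - ζ ω • (1 : H →L[ℂ] H)) *
        (A + X - ζ ω • (1 : H →L[ℂ] H))) u := by rw [hinv]; rfl
    rw [this, ContinuousLinearMap.mul_apply, hTu ω, ← hzω, sub_self, zero_smul, map_zero]
  -- pointwise a.e. identity of the integrands applied to u
  have hkey : ∀ᵐ ω ∂μ,
      (K ω ∘L ((A + X) ∘L Ring.inverse (A + X - ζ ω • (1 : H →L[ℂ] H)))) u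
        = (z / (z - ζ ω)) • (K ω u) := by
    filter_upwards [hunit, hz] with ω hω hne
    have hne' : z - ζ ω ≠ 0 := sub_ne_zero.mpr hne
    have hinv : Ring.inverse (A + X - ζ ω • (1 : H →L[ℂ] H)) *
        (A + X - ζ ω • (1 : H →L[ℂ] H)) = 1 := Ring.inverse_mul_cancel _ hω
    have hRu : Ring.inverse (A + X - ζ ω • (1 : H →L[ℂ] H)) u = (z - ζ ω)⁻¹ • u := by
      have h1 : u = (z - ζ ω) • Ring.inverse (A + X - ζ ω • (1 : H →L[ℂ] H)) u := by
        conv_lhs => rw [show u = (Ring.inverse (A + X - ζ ω • (1 : H →L[ℂ] H)) *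
          (A + X - ζ ω • (1 : H →L[ℂ] H))) u from by rw [hinv]; rfl]
        rw [ContinuousLinearMap.mul_apply, hTu ω, _root_.map_smul]
      rw [eq_comm, inv_smul_eq_iff₀ hne']
      exact h1
    simp only [ContinuousLinearMap.comp_apply, hRu, _root_.map_smul, heig, smul_smul]
    rw [div_eq_mul_inv, mul_comm]
  have hint_u : Integrable (fun ω =>
      (K ω ∘L ((A + X) ∘L Ring.inverse (A + X - ζ ω • (1 : H →L[ℂ] H)))) u) μ :=
    hint.apply_continuousLinearMap u
  have hint2 : Integrable (fun ω => (z / (z - ζ ω)) • (K ω u)) μ :=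
    hint_u.congr hkey
  refine ⟨hz, hint2, ?_⟩
  have hXu : X u = ∫ ω, (z / (z - ζ ω)) • (K ω u) ∂μ := by
    rw [hfix, ContinuousLinearMap.integral_apply hint]
    exact integral_congr_ae hkey
  rw [← hXu]
  have : A u = z • u - X u := by
    have := heig
    rw [ContinuousLinearMap.add_apply] at this
    linear_combination (norm := abel) this
  rw [this]; abel
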